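/- Let (λ_n) and (μ_n) be two nondecreasing sequences of reals tending to +∞ such that for every δ ∈ (0,1) there exist constants m¹_δ, m²_δ with λ_n − m¹_δ ≤ μ_n ≤ (1+δ)λ_n + m²_δ for all n. If lim_{λ→∞} λ^{-1} · #{n : λ_n ≤ λ} = c for some constant c > 0, then also lim_{λ→∞} λ^{-1} · #{n : μ_n ≤ λ} = c. -/

import Mathlib

open Filter

/-- **Stability of the Weyl law under two-sided eigenvalue comparison.** If `(lam n)`
and `(mu n)` are nondecreasing sequences tending to `+∞` such that for every
`δ ∈ (0,1)` there are constants `m₁, m₂` with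
`lam n - m₁ ≤ mu n ≤ (1+δ) lam n + m₂` for all `n`, and if
`(#{n : lam n ≤ x}) / x → c > 0` as `x → ∞`, then also `(#{n : mu n ≤ x}) / x → c`. -/
theorem weyl_law_transfer
    (lam mu : ℕ → ℝ) (hlam_mono : Monotone lam) (hmu_mono : Monotone mu)
    (hlam_top : Tendsto lam atTop atTop) (hmu_top : Tendsto mu atTop atTop)
    (hcomp : ∀ δ : ℝ, 0 < δ → δ < 1 →
      ∃ m₁ m₂ : ℝ, ∀ n, lam n - m₁ ≤ mu n ∧ mu n ≤ (1 + δ) * lam n + m₂)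
    (c : ℝ) (hc : 0 < c)
    (hweyl : Tendsto (fun x : ℝ => (Nat.card {n : ℕ | lam n ≤ x} : ℝ) / x)
      atTop (nhds c)) :
    Tendsto (fun x : ℝ => (Nat.card {n : ℕ | mu n ≤ x} : ℝ) / x)
      atTop (nhds c) := by
  -- finiteness of sublevel sets
  have hfin : ∀ (f : ℕ → ℝ), Tendsto f atTop atTop → ∀ x : ℝ, {n : ℕ | f n ≤ x}.Finite := by
    intro f hf x
    obtain ⟨N, hN⟩ := (tendsto_atTop.1 hf (x + 1)).exists_forall_of_atTop
    refine (Set.finite_Iio N).subset fun n hn => ?_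
    by_contra h
    have := hN n (not_lt.mp h)
    simp only [Set.mem_setOf_eq] at hn
    linarith
  have hfinl := hfin lam hlam_top
  have hfinm := hfin mu hmu_top
  rw [Metric.tendsto_nhds]
  intro ε hε
  -- choose δ
  set δ : ℝ := min (ε / (2 * c)) (1 / 2) with hδdef
  have hδ0 : 0 < δ := lt_min (by positivity) (by norm_num)
  have hδ1 : δ < 1 := lt_of_le_of_lt (min_le_right _ _) (by norm_num)
  have h1δ : (0 : ℝ) < 1 + δ := by linarith
  obtain ⟨m₁, m₂, hm⟩ := hcomp δ hδ0 hδ1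
  -- upper bound function tends to c
  have hU : Tendsto (fun x : ℝ => (Nat.card {n : ℕ | lam n ≤ x + m₁} : ℝ) / x)
      atTop (nhds c) := by
    have h1 : Tendsto (fun x : ℝ => (Nat.card {n : ℕ | lam n ≤ x + m₁} : ℝ) / (x + m₁))
        atTop (nhds c) := hweyl.comp (tendsto_atTop_add_const_right atTop m₁ tendsto_id)
    have h2 : Tendsto (fun x : ℝ => (x + m₁) / x) atTop (nhds 1) := by
      have : Tendsto (fun x : ℝ => 1 + m₁ / x) atTop (nhds (1 + 0)) :=
        tendsto_const_nhds.add (tendsto_const_nhds.div_atTop tendsto_id)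
      rw [add_zero] at this
      refine this.congr' ?_
      filter_upwards [eventually_gt_atTop (0 : ℝ)] with x hx
      field_simp
    have := h1.mul h2
    rw [mul_one] at this
    refine this.congr' ?_
    filter_upwards [eventually_gt_atTop (max 0 (-m₁))] with x hx
    have hx0 : (0 : ℝ) < x := lt_of_le_of_lt (le_max_left _ _) hx
    have hxm : (0 : ℝ) < x + m₁ := by
      have := lt_of_le_of_lt (le_max_right 0 (-m₁)) hx; linarith
    field_simp
  -- lower bound function tends to c / (1+δ)
  have hL : Tendsto (fun x : ℝ => (Nat.card {n : ℕ | lam n ≤ (x - m₂) / (1 + δ)} : ℝ) / x)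
      atTop (nhds (c / (1 + δ))) := by
    have hmap : Tendsto (fun x : ℝ => (x - m₂) / (1 + δ)) atTop atTop :=
      (tendsto_atTop_add_const_right atTop (-m₂) tendsto_id).atTop_div_const h1δ
    have h1 : Tendsto (fun x : ℝ =>
        (Nat.card {n : ℕ | lam n ≤ (x - m₂) / (1 + δ)} : ℝ) / ((x - m₂) / (1 + δ)))
        atTop (nhds c) := hweyl.comp hmap
    have h2 : Tendsto (fun x : ℝ => ((x - m₂) / (1 + δ)) / x) atTop (nhds (1 / (1 + δ))) := by
      have : Tendsto (fun x : ℝ => (1 - m₂ / x) * (1 / (1 + δ)))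
          atTop (nhds ((1 - 0) * (1 / (1 + δ)))) :=
        (tendsto_const_nhds.sub (tendsto_const_nhds.div_atTop tendsto_id)).mul tendsto_const_nhds
      rw [sub_zero, one_mul] at this
      refine this.congr' ?_
      filter_upwards [eventually_gt_atTop (0 : ℝ)] with x hx
      field_simp
    have := h1.mul h2
    rw [mul_one_div] at this
    refine this.congr' ?_
    filter_upwards [eventually_gt_atTop (max 0 m₂)] with x hx
    have hx0 : (0 : ℝ) < x := lt_of_le_of_lt (le_max_left _ _) hx
    have hxm : (0 : ℝ) < x - m₂ := by
      have := lt_of_le_of_lt (le_max_right 0 m₂) hx; linarith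
    rw [div_mul_div_cancel₀ (by positivity)]
  -- δ was chosen so that c/(1+δ) > c - ε
  have hclow : c - ε < c / (1 + δ) := by
    have hδle : δ ≤ ε / (2 * c) := min_le_left _ _
    have hcδ : c * δ ≤ ε / 2 := by
      have := (le_div_iff₀ (by positivity : (0:ℝ) < 2 * c)).mp hδle
      nlinarith
    rw [lt_div_iff₀ h1δ]
    nlinarith
  have hUε : ∀ᶠ x : ℝ in atTop,
      (Nat.card {n : ℕ | lam n ≤ x + m₁} : ℝ) / x < c + ε :=
    hU.eventually (gt_mem_nhds (by linarith))
  have hLε : ∀ᶠ x : ℝ in atTop,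
      c - ε < (Nat.card {n : ℕ | lam n ≤ (x - m₂) / (1 + δ)} : ℝ) / x :=
    hL.eventually (lt_mem_nhds hclow)
  filter_upwards [hUε, hLε, eventually_gt_atTop (0 : ℝ)] with x hUx hLx hx0
  -- counting inequalities
  have hsub1 : {n : ℕ | mu n ≤ x} ⊆ {n : ℕ | lam n ≤ x + m₁} := by
    intro n hn
    have := (hm n).1
    simp only [Set.mem_setOf_eq] at hn ⊢
    linarith
  have hsub2 : {n : ℕ | lam n ≤ (x - m₂) / (1 + δ)} ⊆ {n : ℕ | mu n ≤ x} := by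
    intro n hn
    simp only [Set.mem_setOf_eq] at hn ⊢
    have h := (hm n).2
    have h2 : lam n * (1 + δ) ≤ x - m₂ := (le_div_iff₀ h1δ).mp hn
    nlinarith
  have hcard1 : (Nat.card {n : ℕ | mu n ≤ x} : ℝ) ≤ (Nat.card {n : ℕ | lam n ≤ x + m₁} : ℝ) := by
    have := Set.ncard_le_ncard hsub1 (hfinl (x + m₁))
    simpa [Nat.card_coe_set_eq] using (Nat.cast_le (α := ℝ)).2 this
  have hcard2 : (Nat.card {n : ℕ | lam n ≤ (x - m₂) / (1 + δ)} : ℝ)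
      ≤ (Nat.card {n : ℕ | mu n ≤ x} : ℝ) := by
    have := Set.ncard_le_ncard hsub2 (hfinm x)
    simpa [Nat.card_coe_set_eq] using (Nat.cast_le (α := ℝ)).2 this
  have hdiv1 : (Nat.card {n : ℕ | mu n ≤ x} : ℝ) / x
      ≤ (Nat.card {n : ℕ | lam n ≤ x + m₁} : ℝ) / x := by gcongr
  have hdiv2 : (Nat.card {n : ℕ | lam n ≤ (x - m₂) / (1 + δ)} : ℝ) / x
      ≤ (Nat.card {n : ℕ | mu n ≤ x} : ℝ) / x := by gcongr
  rw [Real.dist_eq, abs_lt]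
  constructor <;> linarith
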